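/- For m > 1 and d ≥ 1, lim_{η → -∞} [ ((m-1)/m) (d w_d)^{m-1} (∫_0^π (cosθ-η)^{1/(m-1)} sin^{d-1}θ cosθ dθ)(∫_0^π (cosθ-η)^{1/(m-1)} sin^{d-1}θ dθ)^{m-2} ] = |S^d|^{m-1}/(m(d+1)). -/

import Mathlib

open Real MeasureTheory Filter Topology

private lemma aux_abs_div {η c : ℝ} (hη : η ≤ -2) (hc : |c| ≤ 1) : |c / η| ≤ 1 / 2 := by
  have h2 : (2:ℝ) ≤ |η| := by rw [abs_of_neg (by linarith)]; linarith
  rw [abs_div, div_le_iff₀ (by linarith : (0:ℝ) < |η|)]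
  nlinarith [abs_nonneg c]

private lemma aux_mvt {p : ℝ} (hp : 0 < p) {x : ℝ} (hx : x ∈ Set.Icc (1/2 : ℝ) (3/2)) :
    |x ^ p - 1| ≤ p * max ((1/2 : ℝ) ^ (p - 1)) ((3/2 : ℝ) ^ (p - 1)) * |x - 1| := by
  set K := max ((1/2 : ℝ) ^ (p - 1)) ((3/2 : ℝ) ^ (p - 1)) with hK
  have hderiv : ∀ y ∈ Set.Icc (1/2 : ℝ) (3/2),
      HasDerivWithinAt (fun t : ℝ => t ^ p) (p * y ^ (p - 1)) (Set.Icc (1/2 : ℝ) (3/2)) y := by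
    intro y hy
    exact (Real.hasDerivAt_rpow_const (Or.inl (by linarith [hy.1] : y ≠ 0))).hasDerivWithinAt
  have hbound : ∀ y ∈ Set.Icc (1/2 : ℝ) (3/2), ‖p * y ^ (p - 1)‖ ≤ p * K := by
    intro y hy
    have hy0 : (0:ℝ) < y := by linarith [hy.1]
    rw [Real.norm_eq_abs, abs_of_nonneg (mul_nonneg hp.le (Real.rpow_nonneg hy0.le _))]
    refine mul_le_mul_of_nonneg_left ?_ hp.le
    rcases le_total 1 p with h1 | h1
    · exact le_trans (Real.rpow_le_rpow hy0.le hy.2 (by linarith)) (le_max_right _ _)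
    · exact le_trans (Real.rpow_le_rpow_of_nonpos (by norm_num) hy.1 (by linarith))
        (le_max_left _ _)
  have h := (convex_Icc (1/2 : ℝ) (3/2)).norm_image_sub_le_of_norm_hasDerivWithin_le hderiv hbound
    (by norm_num : (1:ℝ) ∈ Set.Icc (1/2 : ℝ) (3/2)) hx
  simpa [Real.norm_eq_abs] using h

private lemma aux_inv_atBot : Tendsto (fun η : ℝ => η⁻¹) atBot (𝓝 0) := by
  have h := (tendsto_inv_atTop_zero.comp tendsto_neg_atBot_atTop (α := ℝ)).neg
  simpa [Function.comp, inv_neg] using h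

private lemma aux_tendsto_core {p : ℝ} (hp : 0 < p) (c : ℝ) :
    Tendsto (fun η : ℝ => -η * ((1 - c / η) ^ p - 1)) atBot (𝓝 (p * c)) := by
  have hg : HasDerivAt (fun t : ℝ => (1 + c * t) ^ p) (p * c) 0 := by
    have h1 : HasDerivAt (fun t : ℝ => 1 + c * t) c 0 := by
      simpa using ((hasDerivAt_id (0:ℝ)).const_mul c).const_add 1
    have h2 := h1.rpow_const (p := p) (by norm_num)
    simpa [mul_comm] using h2
  have hslope := hasDerivAt_iff_tendsto_slope.mp hg
  have ht : Tendsto (fun η : ℝ => -η⁻¹) atBot (𝓝[≠] (0:ℝ)) := by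
    have h1 : Tendsto (fun η : ℝ => (-η)⁻¹) atBot (𝓝[>] (0:ℝ)) :=
      tendsto_inv_atTop_nhdsGT_zero.comp tendsto_neg_atBot_atTop
    have h2 : (𝓝[>] (0:ℝ)) ≤ 𝓝[≠] (0:ℝ) :=
      nhdsWithin_mono _ (fun x hx => ne_of_gt hx)
    refine Tendsto.congr (fun η => by rw [inv_neg]) (h1.mono_right h2)
  refine (hslope.comp ht).congr' ?_
  filter_upwards [eventually_le_atBot (-1:ℝ)] with η hη
  have hη0 : η ≠ 0 := by intro h; rw [h] at hη; norm_num at hη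
  have he : (1 : ℝ) + c * -η⁻¹ = 1 - c / η := by rw [div_eq_mul_inv]; ring
  simp only [Function.comp, slope_def_field, he, sub_zero]
  rw [div_eq_mul_inv, inv_neg, inv_inv]
  simp [mul_comm]

theorem stmt_11 (m : ℝ) (hm : 1 < m) (d : ℕ) (hd : 1 ≤ d)
    (wd : ℝ) (hwd : wd = (volume (Metric.ball (0 : EuclideanSpace ℝ (Fin d)) 1)).toReal)
    (Sd : ℝ) (hSd : Sd = d * wd * ∫ θ in (0:ℝ)..π, Real.sin θ ^ (d - 1)) :
    Tendsto (fun η : ℝ =>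
      ((m - 1) / m) * (d * wd) ^ (m - 1)
        * (∫ θ in (0:ℝ)..π, (Real.cos θ - η) ^ (1 / (m - 1)) * Real.sin θ ^ (d - 1) * Real.cos θ)
        * (∫ θ in (0:ℝ)..π, (Real.cos θ - η) ^ (1 / (m - 1)) * Real.sin θ ^ (d - 1)) ^ (m - 2))
      atBot (nhds (Sd ^ (m - 1) / (m * (d + 1)))) := by
  obtain ⟨k, rfl⟩ : ∃ k, d = k + 1 := ⟨d - 1, (Nat.succ_pred_eq_of_pos hd).symm⟩
  simp only [Nat.add_sub_cancel] at hSd ⊢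
  have hm1 : (0:ℝ) < m - 1 := by linarith
  have hm0 : (0:ℝ) < m := by linarith
  set p : ℝ := 1 / (m - 1) with hp_def
  have hp : 0 < p := by positivity
  set A : ℝ := ∫ θ in (0:ℝ)..π, Real.sin θ ^ k with hA_def
  set B : ℝ := ∫ θ in (0:ℝ)..π, Real.sin θ ^ k * Real.cos θ ^ 2 with hB_def
  set D : ℝ := ((k + 1 : ℕ) : ℝ) * wd with hD_def
  have hA : 0 < A := by
    rw [hA_def]
    apply intervalIntegral.intervalIntegral_pos_of_pos_on
    · exact (Continuous.intervalIntegrable (by fun_prop) _ _)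
    · intro x hx
      exact pow_pos (Real.sin_pos_of_pos_of_lt_pi hx.1 hx.2) k
    · exact Real.pi_pos
  -- ∫ sin^k cos = 0
  have hzero : (∫ θ in (0:ℝ)..π, Real.sin θ ^ k * Real.cos θ) = 0 := by
    have h : ∀ θ ∈ Set.uIcc (0:ℝ) π,
        HasDerivAt (fun t => Real.sin t ^ (k+1) / ((k:ℝ)+1)) (Real.sin θ ^ k * Real.cos θ) θ := by
      intro θ _
      have h1 := (Real.hasDerivAt_sin θ).pow (k+1)
      have h2 := h1.div_const ((k:ℝ)+1)
      refine h2.congr_deriv ?_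
      have hk0 : ((k:ℝ)+1) ≠ 0 := by positivity
      simp only [Nat.add_sub_cancel]
      push_cast
      field_simp
    rw [intervalIntegral.integral_eq_sub_of_hasDerivAt h
      (Continuous.intervalIntegrable (by fun_prop) _ _)]
    simp
  -- B = A / (k+2)
  have hB : B = A / ((k:ℝ) + 2) := by
    have h1 : (∫ θ in (0:ℝ)..π, Real.sin θ ^ (k+2)) = ((k:ℝ)+1)/((k:ℝ)+2) * A := by
      rw [integral_sin_pow k]
      simp [hA_def]
    have h2 : B = A - ∫ θ in (0:ℝ)..π, Real.sin θ ^ (k+2) := by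
      rw [hB_def, hA_def, ← intervalIntegral.integral_sub
        (Continuous.intervalIntegrable (by fun_prop) _ _)
        (Continuous.intervalIntegrable (by fun_prop) _ _)]
      apply intervalIntegral.integral_congr
      intro θ _
      dsimp only
      rw [Real.cos_sq']
      ring
    have hk2 : ((k:ℝ)+2) ≠ 0 := by positivity
    rw [h2, h1]
    field_simp
    ring
  -- limit of G₂
  have hG2 : Tendsto (fun η : ℝ => ∫ θ in (0:ℝ)..π, (1 - Real.cos θ / η) ^ p * Real.sin θ ^ k)
      atBot (𝓝 A) := by
    have key : Tendsto
        (fun η : ℝ => ∫ θ in Set.Ioc (0:ℝ) π, (1 - Real.cos θ / η) ^ p * Real.sin θ ^ k)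
        atBot (𝓝 (∫ θ in Set.Ioc (0:ℝ) π, Real.sin θ ^ k)) := by
      apply tendsto_integral_filter_of_dominated_convergence (fun θ => 2 ^ p * Real.sin θ ^ k)
      · filter_upwards with η
        exact (((continuous_const.sub (Real.continuous_cos.div_const η)).rpow_const
          (fun _ => Or.inr hp.le)).mul (Real.continuous_sin.pow k)).aestronglyMeasurable
      · filter_upwards [eventually_le_atBot (-2:ℝ)] with η hη
        filter_upwards [ae_restrict_mem measurableSet_Ioc] with θ hθ
        have hs0 : 0 ≤ Real.sin θ := Real.sin_nonneg_of_nonneg_of_le_pi hθ.1.le hθ.2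
        have habs := aux_abs_div hη (Real.abs_cos_le_one θ)
        obtain ⟨ha1, ha2⟩ := abs_le.mp habs
        have h1 : (0:ℝ) ≤ 1 - Real.cos θ / η := by linarith
        have h2 : 1 - Real.cos θ / η ≤ 2 := by linarith
        rw [Real.norm_eq_abs, abs_mul, abs_of_nonneg (Real.rpow_nonneg h1 p),
          abs_of_nonneg (pow_nonneg hs0 k)]
        exact mul_le_mul_of_nonneg_right (Real.rpow_le_rpow h1 h2 hp.le) (pow_nonneg hs0 k)
      · exact Continuous.integrableOn_Ioc (by fun_prop)
      · refine Filter.Eventually.of_forall (fun θ => ?_)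
        have hbase : Tendsto (fun η : ℝ => 1 - Real.cos θ / η) atBot (𝓝 1) := by
          have h1 : Tendsto (fun η : ℝ => Real.cos θ / η) atBot (𝓝 0) := by
            simpa [div_eq_mul_inv] using aux_inv_atBot.const_mul (Real.cos θ)
          simpa using tendsto_const_nhds.sub h1
        have h3 := (hbase.rpow_const (p := p) (Or.inl one_ne_zero)).mul_const (Real.sin θ ^ k)
        simpa using h3
    rw [hA_def]
    simp only [intervalIntegral.integral_of_le Real.pi_pos.le]
    exact key
  -- limit of G₁
  have hG1 : Tendsto (fun η : ℝ =>
        ∫ θ in (0:ℝ)..π, -η * ((1 - Real.cos θ / η) ^ p - 1) * Real.sin θ ^ k * Real.cos θ)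
      atBot (𝓝 (p * B)) := by
    set K : ℝ := p * max ((1/2 : ℝ) ^ (p - 1)) ((3/2 : ℝ) ^ (p - 1)) with hKdef
    have hK0 : 0 ≤ K := mul_nonneg hp.le (le_trans (Real.rpow_nonneg (by norm_num) _)
      (le_max_left _ _))
    have key : Tendsto (fun η : ℝ =>
          ∫ θ in Set.Ioc (0:ℝ) π,
            -η * ((1 - Real.cos θ / η) ^ p - 1) * Real.sin θ ^ k * Real.cos θ)
        atBot (𝓝 (∫ θ in Set.Ioc (0:ℝ) π, p * Real.cos θ * Real.sin θ ^ k * Real.cos θ)) := by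
      apply tendsto_integral_filter_of_dominated_convergence (fun θ => K * Real.sin θ ^ k)
      · filter_upwards with η
        refine Continuous.aestronglyMeasurable ?_
        have hc : Continuous (fun θ : ℝ => (1 - Real.cos θ / η) ^ p) :=
          (continuous_const.sub (Real.continuous_cos.div_const η)).rpow_const
            (fun _ => Or.inr hp.le)
        fun_prop
      · filter_upwards [eventually_le_atBot (-2:ℝ)] with η hη
        filter_upwards [ae_restrict_mem measurableSet_Ioc] with θ hθ
        have hs0 : 0 ≤ Real.sin θ := Real.sin_nonneg_of_nonneg_of_le_pi hθ.1.le hθ.2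
        have habs := aux_abs_div hη (Real.abs_cos_le_one θ)
        obtain ⟨ha1, ha2⟩ := abs_le.mp habs
        have hxmem : 1 - Real.cos θ / η ∈ Set.Icc (1/2 : ℝ) (3/2) :=
          ⟨by linarith, by linarith⟩
        have hmvt := aux_mvt hp hxmem
        have h1 : |(1 - Real.cos θ / η) ^ p - 1| ≤ K * |Real.cos θ / η| := by
          calc |(1 - Real.cos θ / η) ^ p - 1| ≤ K * |1 - Real.cos θ / η - 1| := hmvt
            _ = K * |Real.cos θ / η| := by rw [show (1 : ℝ) - Real.cos θ / η - 1
                  = -(Real.cos θ / η) by ring, abs_neg]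
        have hη0 : η ≠ 0 := by intro h; rw [h] at hη; norm_num at hη
        have h2 : |η| * |Real.cos θ / η| ≤ 1 := by
          rw [← abs_mul, show η * (Real.cos θ / η) = Real.cos θ by field_simp]
          exact Real.abs_cos_le_one θ
        have t1 : |η| * |(1 - Real.cos θ / η) ^ p - 1| ≤ K := by
          calc |η| * |(1 - Real.cos θ / η) ^ p - 1|
              ≤ |η| * (K * |Real.cos θ / η|) := mul_le_mul_of_nonneg_left h1 (abs_nonneg η)
            _ = K * (|η| * |Real.cos θ / η|) := by ring
            _ ≤ K * 1 := mul_le_mul_of_nonneg_left h2 hK0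
            _ = K := mul_one K
        rw [Real.norm_eq_abs, abs_mul, abs_mul, abs_mul, abs_neg,
          abs_of_nonneg (pow_nonneg hs0 k)]
        calc |η| * |(1 - Real.cos θ / η) ^ p - 1| * Real.sin θ ^ k * |Real.cos θ|
            ≤ K * Real.sin θ ^ k * 1 :=
              mul_le_mul (mul_le_mul_of_nonneg_right t1 (pow_nonneg hs0 k))
                (Real.abs_cos_le_one θ) (abs_nonneg _)
                (mul_nonneg hK0 (pow_nonneg hs0 k))
          _ = K * Real.sin θ ^ k := mul_one _
      · exact Continuous.integrableOn_Ioc (by fun_prop)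
      · refine Filter.Eventually.of_forall (fun θ => ?_)
        exact ((aux_tendsto_core hp (Real.cos θ)).mul_const (Real.sin θ ^ k)).mul_const
          (Real.cos θ)
    have hval2 : (∫ θ in Set.Ioc (0:ℝ) π, p * Real.cos θ * Real.sin θ ^ k * Real.cos θ)
        = p * B := by
      rw [← intervalIntegral.integral_of_le Real.pi_pos.le, hB_def,
        ← intervalIntegral.integral_const_mul]
      apply intervalIntegral.integral_congr
      intro θ _
      dsimp only
      ring
    rw [← hval2]
    simpa only [intervalIntegral.integral_of_le Real.pi_pos.le] using key
  -- main limit of the surrogate expression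
  have hD0 : 0 ≤ D := by
    rw [hD_def, hwd]
    positivity
  have main : Tendsto (fun η : ℝ =>
        ((m - 1) / m) * D ^ (m - 1)
          * (∫ θ in (0:ℝ)..π, -η * ((1 - Real.cos θ / η) ^ p - 1) * Real.sin θ ^ k * Real.cos θ)
          * (∫ θ in (0:ℝ)..π, (1 - Real.cos θ / η) ^ p * Real.sin θ ^ k) ^ (m - 2))
      atBot (𝓝 (((m - 1) / m) * D ^ (m - 1) * (p * B) * A ^ (m - 2))) :=
    (hG1.const_mul _).mul (hG2.rpow_const (Or.inl hA.ne'))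
  -- value identification
  have hval : ((m - 1) / m) * D ^ (m - 1) * (p * B) * A ^ (m - 2)
      = Sd ^ (m - 1) / (m * (((k + 1 : ℕ) : ℝ) + 1)) := by
    have hApow : A ^ (m - 1) = A ^ (m - 2) * A := by
      rw [← Real.rpow_add_one hA.ne' (m - 2)]
      congr 1
      ring
    rw [hSd, Real.mul_rpow hD0 hA.le, hApow, hB, hp_def]
    have hk2 : ((k:ℝ) + 2) ≠ 0 := by positivity
    push_cast
    field_simp
    ring
  rw [← hval]
  refine Tendsto.congr' ?_ main
  filter_upwards [eventually_le_atBot (-2:ℝ)] with η hη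
  have hη0 : η < 0 := by linarith
  have hne : η ≠ 0 := ne_of_lt hη0
  have hs : (0:ℝ) < -η := by linarith
  have hnn : ∀ θ, (0:ℝ) ≤ 1 - Real.cos θ / η := by
    intro θ
    have := (abs_le.mp (aux_abs_div hη (Real.abs_cos_le_one θ))).2
    linarith
  have step1 : ∀ θ, (Real.cos θ - η) ^ p = (-η) ^ p * (1 - Real.cos θ / η) ^ p := by
    intro θ
    rw [← Real.mul_rpow hs.le (hnn θ)]
    congr 1
    field_simp
    ring
  have hI2 : (∫ θ in (0:ℝ)..π, (Real.cos θ - η) ^ p * Real.sin θ ^ k)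
      = (-η) ^ p * ∫ θ in (0:ℝ)..π, (1 - Real.cos θ / η) ^ p * Real.sin θ ^ k := by
    rw [← intervalIntegral.integral_const_mul]
    apply intervalIntegral.integral_congr
    intro θ _
    dsimp only
    rw [step1 θ]
    ring
  have hee : (-η) ^ (p - 1) * (-η) = (-η) ^ p := by
    rw [← Real.rpow_add_one hs.ne' (p - 1)]
    congr 1
    ring
  have hcont : Continuous fun θ : ℝ => (Real.cos θ - η) ^ p :=
    (Real.continuous_cos.sub continuous_const).rpow_const (fun _ => Or.inr hp.le)
  have hI1 : (∫ θ in (0:ℝ)..π, (Real.cos θ - η) ^ p * Real.sin θ ^ k * Real.cos θ)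
      = (-η) ^ (p - 1)
        * ∫ θ in (0:ℝ)..π, -η * ((1 - Real.cos θ / η) ^ p - 1) * Real.sin θ ^ k * Real.cos θ := by
    rw [← intervalIntegral.integral_const_mul]
    have hcong : Set.EqOn
        (fun θ => (-η) ^ (p - 1) * (-η * ((1 - Real.cos θ / η) ^ p - 1) * Real.sin θ ^ k
          * Real.cos θ))
        (fun θ => (Real.cos θ - η) ^ p * Real.sin θ ^ k * Real.cos θ
          - (-η) ^ p * (Real.sin θ ^ k * Real.cos θ)) (Set.uIcc (0:ℝ) π) := by
      intro θ _
      dsimp only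
      rw [step1 θ, ← hee]
      ring
    rw [intervalIntegral.integral_congr hcong,
      intervalIntegral.integral_sub
        (Continuous.intervalIntegrable (u := fun θ => (Real.cos θ - η) ^ p * Real.sin θ ^ k * Real.cos θ)
          ((hcont.mul (Real.continuous_sin.pow k)).mul Real.continuous_cos) _ _)
        (Continuous.intervalIntegrable (u := fun θ => (-η) ^ p * (Real.sin θ ^ k * Real.cos θ))
          (continuous_const.mul ((Real.continuous_sin.pow k).mul Real.continuous_cos)) _ _),
      intervalIntegral.integral_const_mul, hzero, mul_zero, sub_zero]
  have hG2nn : 0 ≤ ∫ θ in (0:ℝ)..π, (1 - Real.cos θ / η) ^ p * Real.sin θ ^ k :=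
    intervalIntegral.integral_nonneg Real.pi_pos.le (fun θ hθ =>
      mul_nonneg (Real.rpow_nonneg (hnn θ) p)
        (pow_nonneg (Real.sin_nonneg_of_nonneg_of_le_pi hθ.1 hθ.2) k))
  have hexp : p - 1 + p * (m - 2) = 0 := by
    rw [hp_def]
    field_simp
    ring
  have hone : (-η) ^ (p - 1) * (-η) ^ (p * (m - 2)) = 1 := by
    rw [← Real.rpow_add hs, hexp, Real.rpow_zero]
  rw [hI1, hI2, Real.mul_rpow (Real.rpow_nonneg hs.le p) hG2nn, ← Real.rpow_mul hs.le]
  linear_combination -(((m - 1) / m) * D ^ (m - 1)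
    * (∫ θ in (0:ℝ)..π, -η * ((1 - Real.cos θ / η) ^ p - 1) * Real.sin θ ^ k * Real.cos θ)
    * (∫ θ in (0:ℝ)..π, (1 - Real.cos θ / η) ^ p * Real.sin θ ^ k) ^ (m - 2)) * hone
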